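/- arXiv:1312.7792 — 7 statements merged into one kernel-verified Lean document; each statement's English description precedes it below -/
import Mathlib

section
/- Let ν be a positive Borel measure on the space of affine hyperplanes in ℝⁿ (n ≥ 2) such that ν of the set of hyperplanes through any single point of a convex domain Ω is zero, ν of the set of hyperplanes meeting any nondegenerate segment in Ω is positive, and ν of the set of hyperplanes meeting any compact subset of Ω is finite. Then d_ν(x,y) := ν({H : H ∩ [x,y] ≠ ∅}) defines a metric on Ω. -/
open MeasureTheory Set

noncomputable section

/-- Euclidean space `ℝⁿ`. -/
abbrev Euc (n : ℕ) := EuclideanSpace ℝ (Fin n)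

/-- The space of affine hyperplanes in `ℝⁿ`, encoded as pairs `(v, c)` with `‖v‖ = 1`,
representing the hyperplane `{x : ⟪x, v⟫ = c}`. -/
abbrev Hyp (n : ℕ) := {p : Euc n × ℝ // ‖p.1‖ = 1}

/-- The hyperplane determined by `H`, as a subset of `ℝⁿ`. -/
def hset {n : ℕ} (H : Hyp n) : Set (Euc n) := {x | (inner ℝ x H.1.1 : ℝ) = H.1.2}

/-- `meets A = π A`: the set of hyperplanes intersecting `A`. -/
def meets {n : ℕ} (A : Set (Euc n)) : Set (Hyp n) := {H | (hset H ∩ A).Nonempty}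

/-- The unit normal of `H` pointing out of the halfspace containing the basepoint `o`. -/
def nrm {n : ℕ} (o : Euc n) (H : Hyp n) : Euc n :=
  if (inner ℝ o H.1.1 : ℝ) < H.1.2 then H.1.1 else -H.1.1

/-- `fnu ν o x = ∫_{π[o,x]} n(H) dν(H)`. -/
def fnu {n : ℕ} (ν : Measure (Hyp n)) (o : Euc n) (x : Euc n) : Euc n :=
  ∫ H in meets (segment ℝ o x), nrm o H ∂ν

/-- `sin α(v, H) = |⟪v, n(H)⟫| / |v|`, the sine of the angle between the line of `v`
and the hyperplane `H`. -/
def sinA {n : ℕ} (v : Euc n) (H : Hyp n) : ℝ := |(inner ℝ v H.1.1 : ℝ)| / ‖v‖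

/-- Segments are compact. -/
lemma isCompact_seg {n : ℕ} (x y : Euc n) : IsCompact (segment ℝ x y) := by
  rw [segment_eq_image]
  exact isCompact_Icc.image (by continuity)

/-- A hyperplane meeting `[x,z]` meets `[x,y]` or `[y,z]`. -/
lemma meets_tri {n : ℕ} (x y z : Euc n) :
    meets (segment ℝ x z) ⊆ meets (segment ℝ x y) ∪ meets (segment ℝ y z) := by
  rintro H ⟨p, hpH, hpseg⟩
  set v := H.1.1
  set c := H.1.2
  set L : Euc n →ₗ[ℝ] ℝ := ((innerSL ℝ).flip v).toLinearMap with hL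
  have himg : ∀ a b : Euc n, L '' segment ℝ a b = segment ℝ (L a) (L b) :=
    fun a b => by simpa using image_segment ℝ L.toAffineMap a b
  have hmem : ∀ a b : Euc n, c ∈ uIcc (L a) (L b) → H ∈ meets (segment ℝ a b) := by
    intro a b hcb
    rw [← segment_eq_uIcc, ← himg] at hcb
    obtain ⟨q, hq, hqc⟩ := hcb
    exact ⟨q, hqc, hq⟩
  have hc : c ∈ uIcc (L x) (L z) := by
    rw [← segment_eq_uIcc, ← himg]
    exact ⟨p, hpseg, hpH⟩
  rw [mem_uIcc] at hc
  rcases le_total (L y) c with h1 | h1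
  · rcases hc with ⟨_, h2⟩ | ⟨_, h2⟩
    · right; exact hmem y z (mem_uIcc.2 (Or.inl ⟨h1, h2⟩))
    · left; exact hmem x y (mem_uIcc.2 (Or.inr ⟨h1, h2⟩))
  · rcases hc with ⟨h2, _⟩ | ⟨h2, _⟩
    · left; exact hmem x y (mem_uIcc.2 (Or.inl ⟨h2, h1⟩))
    · right; exact hmem y z (mem_uIcc.2 (Or.inr ⟨h2, h1⟩))

/-- under the standing assumptions on `ν`, `d_ν(x,y) = ν(π[x,y])` is a metric
on the convex domain `Ω`. -/
theorem stmt0 (n : ℕ) (hn : 2 ≤ n) (Ω : Set (Euc n)) (hΩo : IsOpen Ω) (hΩne : Ω.Nonempty)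
    (hΩc : Convex ℝ Ω) (ν : Measure (Hyp n))
    (hpt : ∀ p ∈ Ω, ν (meets {p}) = 0)
    (hseg : ∀ x ∈ Ω, ∀ y ∈ Ω, x ≠ y → 0 < ν (meets (segment ℝ x y)))
    (hcpt : ∀ K ⊆ Ω, IsCompact K → ν (meets K) < ⊤)
    (d : Euc n → Euc n → ℝ)
    (hd : ∀ x y, d x y = (ν (meets (segment ℝ x y))).toReal) :
    (∀ x ∈ Ω, ∀ y ∈ Ω, (d x y = 0 ↔ x = y)) ∧
    (∀ x ∈ Ω, ∀ y ∈ Ω, d x y = d y x) ∧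
    (∀ x ∈ Ω, ∀ y ∈ Ω, ∀ z ∈ Ω, d x z ≤ d x y + d y z) := by
  have hfin : ∀ x ∈ Ω, ∀ y ∈ Ω, ν (meets (segment ℝ x y)) < ⊤ := fun x hx y hy =>
    hcpt _ (hΩc.segment_subset hx hy) (isCompact_seg x y)
  refine ⟨?_, ?_, ?_⟩
  · intro x hx y hy
    constructor
    · intro h0
      by_contra hne
      have hpos := hseg x hx y hy hne
      have := ENNReal.toReal_pos hpos.ne' (hfin x hx y hy).ne
      rw [hd] at h0
      linarith
    · rintro rfl
      rw [hd, segment_same, hpt x hx]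
      simp
  · intro x hx y hy
    rw [hd, hd, segment_symm]
  · intro x hx y hy z hz
    rw [hd, hd, hd]
    have h1 : ν (meets (segment ℝ x z)) ≤
        ν (meets (segment ℝ x y)) + ν (meets (segment ℝ y z)) :=
      le_trans (measure_mono (meets_tri x y z)) (measure_union_le _ _)
    have h2 := ENNReal.toReal_mono
      (ENNReal.add_ne_top.2 ⟨(hfin x hx y hy).ne, (hfin y hy z hz).ne⟩) h1
    rwa [ENNReal.toReal_add (hfin x hx y hy).ne (hfin y hy z hz).ne] at h2
end
end

section
/- For x, y in a convex domain Ω and a hyperplane H not passing through a fixed basepoint o ∈ Ω, the symmetric difference of π[o,x] and π[o,y] (sets of hyperplanes meeting the respective segments) agrees with π[x,y] up to the set of hyperplanes passing through x or through y (a ν-null set under the standing assumptions). -/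
open MeasureTheory Set

noncomputable section

/-- A hyperplane meets the segment `[a, b]` iff its constant `c` lies between the
inner products of the endpoints with its normal vector. -/
lemma meets_segment_iff {n : ℕ} (H : Hyp n) (a b : Euc n) :
    H ∈ meets (segment ℝ a b) ↔
      H.1.2 ∈ uIcc (inner ℝ a H.1.1 : ℝ) (inner ℝ b H.1.1 : ℝ) := by
  rw [← segment_eq_uIcc]
  constructor
  · rintro ⟨p, hp, u, v, hu, hv, huv, rfl⟩
    refine ⟨u, v, hu, hv, huv, ?_⟩
    simp only [hset, mem_setOf_eq, inner_add_left, real_inner_smul_left] at hp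
    simpa [smul_eq_mul] using hp
  · rintro ⟨u, v, hu, hv, huv, hc⟩
    refine ⟨u • a + v • b, ?_, u, v, hu, hv, huv, rfl⟩
    simp only [hset, mem_setOf_eq, inner_add_left, real_inner_smul_left]
    simpa [smul_eq_mul] using hc

/-- Real arithmetic core: `c` lies strictly between `a` and `b` iff it lies between `g` and
exactly one of `a`, `b`, provided `c` differs from each of `g`, `a`, `b`. -/
lemma xor_uIcc (g a b c : ℝ) (hg : g ≠ c) (ha : a ≠ c) (hb : b ≠ c) :
    (¬ ((c ∈ uIcc g a) ↔ (c ∈ uIcc g b))) ↔ c ∈ uIcc a b := by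
  rcases hg.lt_or_gt with h|h <;> rcases ha.lt_or_gt with h1|h1 <;>
    rcases hb.lt_or_gt with h2|h2 <;>
    simp [Set.mem_uIcc, h.le, h.not_ge, h1.le, h1.not_ge, h2.le, h2.not_ge]

/-- for a hyperplane `H` not through the basepoint `o`, membership in the
symmetric difference of `π[o,x]` and `π[o,y]` agrees with membership in `π[x,y]`, except
possibly for hyperplanes through `x` or through `y`; and the latter form a `ν`-null set. -/
theorem stmt2 (n : ℕ) (hn : 2 ≤ n) (Ω : Set (Euc n)) (hΩo : IsOpen Ω) (hΩne : Ω.Nonempty)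
    (hΩc : Convex ℝ Ω) (ν : Measure (Hyp n))
    (hpt : ∀ p ∈ Ω, ν (meets {p}) = 0)
    (o x y : Euc n) (ho : o ∈ Ω) (hx : x ∈ Ω) (hy : y ∈ Ω) :
    (∀ H : Hyp n, o ∉ hset H → H ∉ meets {x} ∪ meets {y} →
      (H ∈ symmDiff (meets (segment ℝ o x)) (meets (segment ℝ o y)) ↔
        H ∈ meets (segment ℝ x y))) ∧
    ν (meets {x} ∪ meets {y}) = 0 := by
  constructor
  · intro H hoH hxy
    simp only [meets, mem_union, mem_setOf_eq, not_or, Set.inter_singleton_nonempty] at hxy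
    obtain ⟨hxH, hyH⟩ := hxy
    simp only [hset, mem_setOf_eq] at hoH hxH hyH
    rw [Set.mem_symmDiff]
    have := xor_uIcc (inner ℝ o H.1.1) (inner ℝ x H.1.1) (inner ℝ y H.1.1) H.1.2 hoH hxH hyH
    rw [meets_segment_iff, meets_segment_iff, meets_segment_iff, ← this]
    tauto
  · exact measure_union_null (hpt x hx) (hpt y hy)
end
end

section
/- The map f_ν is monotone: ⟨f_ν(x) − f_ν(y), x − y⟩ ≥ 0 for all x, y ∈ Ω. -/
open MeasureTheory Set

noncomputable section

instance {n : ℕ} : OpensMeasurableSpace (Hyp n) := Subtype.opensMeasurableSpace _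

/-- A hyperplane meets a segment iff its constant lies between the values of the linear
functional at the endpoints. -/
lemma meets_segment_eq {n : ℕ} (a b : Euc n) :
    meets (segment ℝ a b) =
      {H : Hyp n | H.1.2 ∈ uIcc (inner ℝ H.1.1 a : ℝ) (inner ℝ H.1.1 b : ℝ)} := by
  ext H
  have himg : (fun z : Euc n => (inner ℝ H.1.1 z : ℝ)) '' segment ℝ a b
      = uIcc (inner ℝ H.1.1 a : ℝ) (inner ℝ H.1.1 b : ℝ) := by
    have h : (fun z : Euc n => (inner ℝ H.1.1 z : ℝ))
        = ⇑(((innerSL ℝ H.1.1).toLinearMap).toAffineMap) := rfl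
    rw [h, image_segment, segment_eq_uIcc]; rfl
  constructor
  · rintro ⟨z, hz1, hz2⟩
    rw [Set.mem_setOf_eq, ← himg]
    refine ⟨z, hz2, ?_⟩
    show (inner ℝ H.1.1 z : ℝ) = H.1.2
    rw [real_inner_comm]; exact hz1
  · intro h
    rw [Set.mem_setOf_eq, ← himg] at h
    obtain ⟨z, hz, hz2⟩ := h
    exact ⟨z, by rw [hset, Set.mem_setOf_eq, real_inner_comm]; exact hz2, hz⟩

lemma measurableSet_meets_segment {n : ℕ} (a b : Euc n) :
    MeasurableSet (meets (segment ℝ a b)) := by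
  rw [meets_segment_eq]
  have h1 : Continuous fun H : Hyp n => H.1.1 := continuous_fst.comp continuous_subtype_val
  have hca : Continuous fun H : Hyp n => (inner ℝ H.1.1 a : ℝ) := h1.inner continuous_const
  have hcb : Continuous fun H : Hyp n => (inner ℝ H.1.1 b : ℝ) := h1.inner continuous_const
  have hcc : Continuous fun H : Hyp n => H.1.2 := continuous_snd.comp continuous_subtype_val
  have heq : {H : Hyp n | H.1.2 ∈ uIcc (inner ℝ H.1.1 a : ℝ) (inner ℝ H.1.1 b : ℝ)}
      = {H : Hyp n | min (inner ℝ H.1.1 a : ℝ) (inner ℝ H.1.1 b : ℝ) ≤ H.1.2}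
        ∩ {H : Hyp n | H.1.2 ≤ max (inner ℝ H.1.1 a : ℝ) (inner ℝ H.1.1 b : ℝ)} := by
    ext H
    simp [Set.uIcc, Set.mem_Icc, Set.mem_setOf_eq]
  rw [heq]
  exact ((isClosed_le (hca.min hcb) hcc).measurableSet).inter
    ((isClosed_le hcc (hca.max hcb)).measurableSet)

lemma measurable_nrm {n : ℕ} (o : Euc n) : Measurable (nrm o) := by
  have h1 : Continuous fun H : Hyp n => H.1.1 := continuous_fst.comp continuous_subtype_val
  have hcc : Continuous fun H : Hyp n => H.1.2 := continuous_snd.comp continuous_subtype_val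
  have hs : MeasurableSet {H : Hyp n | (inner ℝ o H.1.1 : ℝ) < H.1.2} :=
    (isOpen_lt (continuous_const.inner h1) hcc).measurableSet
  exact Measurable.ite hs h1.measurable h1.neg.measurable

lemma norm_nrm {n : ℕ} (o : Euc n) (H : Hyp n) : ‖nrm o H‖ = 1 := by
  unfold nrm; split_ifs <;> simp [H.2]

lemma integrableOn_nrm {n : ℕ} (ν : Measure (Hyp n)) (o : Euc n) {A : Set (Hyp n)}
    (hA : ν A < ⊤) : IntegrableOn (nrm o) A ν := by
  have : IsFiniteMeasure (ν.restrict A) := ⟨by rwa [Measure.restrict_apply_univ]⟩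
  exact (integrable_const (1 : ℝ)).mono' (measurable_nrm o).aestronglyMeasurable
    (Filter.Eventually.of_forall fun H => by rw [norm_nrm])

/-- Key pointwise inequality: if `H` meets `[o,a]` but not `[o,b]`, then
`⟪n(H), a - b⟫ ≥ 0`. -/
lemma key_nrm {n : ℕ} (o a b : Euc n) (H : Hyp n)
    (hA : H ∈ meets (segment ℝ o a)) (hB : H ∉ meets (segment ℝ o b)) :
    0 ≤ (inner ℝ (nrm o H) (a - b) : ℝ) := by
  rw [meets_segment_eq, Set.mem_setOf_eq] at hA hB
  have hne : (inner ℝ H.1.1 o : ℝ) ≠ H.1.2 := by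
    intro h
    exact hB (by rw [← h]; exact left_mem_uIcc)
  rw [Set.mem_uIcc] at hA
  rw [Set.mem_uIcc] at hB
  push_neg at hB
  rcases lt_or_gt_of_ne hne with hlt | hgt
  · have hn : nrm o H = H.1.1 := by
      unfold nrm; rw [if_pos (by rw [real_inner_comm]; exact hlt)]
    rw [hn, inner_sub_right]
    have h1 : H.1.2 ≤ (inner ℝ H.1.1 a : ℝ) := by
      rcases hA with ⟨_, h⟩ | ⟨_, h⟩ <;> linarith
    have h2 : (inner ℝ H.1.1 b : ℝ) < H.1.2 := hB.1 hlt.le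
    linarith
  · have hn : nrm o H = -H.1.1 := by
      unfold nrm; rw [if_neg (by rw [real_inner_comm]; exact not_lt.mpr hgt.le)]
    rw [hn, inner_neg_left, inner_sub_right]
    have h1 : (inner ℝ H.1.1 a : ℝ) ≤ H.1.2 := by
      rcases hA with ⟨h, _⟩ | ⟨h, _⟩ <;> linarith
    have h2 : H.1.2 < (inner ℝ H.1.1 b : ℝ) := by
      by_contra h
      exact absurd (hB.2 (not_lt.mp h)) (not_lt.mpr hgt.le)
    linarith

/-- `f_ν` is monotone: `⟨f_ν(x) − f_ν(y), x − y⟩ ≥ 0`. -/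
theorem stmt6 (n : ℕ) (hn : 2 ≤ n) (Ω : Set (Euc n)) (hΩo : IsOpen Ω) (hΩne : Ω.Nonempty)
    (hΩc : Convex ℝ Ω) (ν : Measure (Hyp n))
    (hpt : ∀ p ∈ Ω, ν (meets {p}) = 0)
    (hseg : ∀ x ∈ Ω, ∀ y ∈ Ω, x ≠ y → 0 < ν (meets (segment ℝ x y)))
    (hcpt : ∀ K ⊆ Ω, IsCompact K → ν (meets K) < ⊤)
    (o : Euc n) (ho : o ∈ Ω) :
    ∀ x ∈ Ω, ∀ y ∈ Ω, 0 ≤ (inner ℝ (fnu ν o x - fnu ν o y) (x - y) : ℝ) := by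
  intro x hx y hy
  set w := x - y with hw
  set A := meets (segment ℝ o x) with hAdef
  set B := meets (segment ℝ o y) with hBdef
  have hseg_cpt : ∀ z : Euc n, IsCompact (segment ℝ o z) := fun z => by
    rw [segment_eq_image]
    exact isCompact_Icc.image (by continuity)
  have hνA : ν A < ⊤ := hcpt _ (hΩc.segment_subset ho hx) (hseg_cpt x)
  have hνB : ν B < ⊤ := hcpt _ (hΩc.segment_subset ho hy) (hseg_cpt y)
  have hAm : MeasurableSet A := measurableSet_meets_segment o x
  have hBm : MeasurableSet B := measurableSet_meets_segment o y
  have hIA : IntegrableOn (nrm o) A ν := integrableOn_nrm ν o hνA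
  have hIB : IntegrableOn (nrm o) B ν := integrableOn_nrm ν o hνB
  set g : Hyp n → ℝ := fun H => (inner ℝ w (nrm o H) : ℝ) with hg
  have hgi : ∀ {S : Set (Hyp n)}, IntegrableOn (nrm o) S ν → IntegrableOn g S ν :=
    fun h => (innerSL ℝ w).integrable_comp h
  have hrw : (inner ℝ (fnu ν o x - fnu ν o y) w : ℝ)
      = (∫ H in A, g H ∂ν) - ∫ H in B, g H ∂ν := by
    rw [inner_sub_left, real_inner_comm w (fnu ν o x), real_inner_comm w (fnu ν o y)]
    unfold fnu
    rw [← hAdef, ← hBdef, ← integral_inner hIA w, ← integral_inner hIB w]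
  rw [hrw]
  have hsplit : ∀ (S T : Set (Hyp n)), MeasurableSet S → MeasurableSet T →
      IntegrableOn g S ν →
      (∫ H in S, g H ∂ν) = (∫ H in S ∩ T, g H ∂ν) + ∫ H in S \ T, g H ∂ν := by
    intro S T hS hT hint
    rw [← setIntegral_union (Set.disjoint_left.mpr fun H h1 h2 => h2.2 h1.2)
      (hS.diff hT) (hint.mono_set inter_subset_left) (hint.mono_set diff_subset),
      Set.inter_union_diff]
  rw [hsplit A B hAm hBm (hgi hIA), hsplit B A hBm hAm (hgi hIB), Set.inter_comm B A]
  have h1 : 0 ≤ ∫ H in A \ B, g H ∂ν := by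
    refine setIntegral_nonneg (hAm.diff hBm) fun H hH => ?_
    have hk := key_nrm o x y H hH.1 hH.2
    have he : g H = (inner ℝ (nrm o H) (x - y) : ℝ) := by
      rw [hg, hw]; exact real_inner_comm _ _
    rw [he]; exact hk
  have h2 : (∫ H in B \ A, g H ∂ν) ≤ 0 := by
    refine setIntegral_nonpos (hBm.diff hAm) fun H hH => ?_
    have hk := key_nrm o y x H hH.1 hH.2
    rw [show y - x = -(x - y) from (neg_sub x y).symm, inner_neg_right] at hk
    have he : g H = (inner ℝ (nrm o H) (x - y) : ℝ) := by
      rw [hg, hw]; exact real_inner_comm _ _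
    rw [he]; linarith
  linarith
end
end

section
/- The map f_ν is cyclically monotone: for every m ≥ 2 and all points x₁, …, x_m ∈ Ω with x_{m+1} = x₁, Σ_{k=1}^{m} ⟨f_ν(x_k), x_{k+1} − x_k⟩ ≤ 0. -/
open MeasureTheory Set

noncomputable section

namespace S9
variable {n : ℕ}

def cc (o : Euc n) (H : Hyp n) : ℝ :=
  if (inner ℝ o H.1.1 : ℝ) < H.1.2 then H.1.2 else -H.1.2

def tt (o y : Euc n) (H : Hyp n) : ℝ := (inner ℝ y (nrm o H) : ℝ) - cc o H

def uu (o y : Euc n) (H : Hyp n) : ℝ := max (tt o y H) 0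

lemma norm_nrm (o : Euc n) (H : Hyp n) : ‖nrm o H‖ = 1 := by
  unfold nrm; split_ifs <;> simp [H.2]

lemma tt_self_nonpos (o : Euc n) (H : Hyp n) : tt o o H ≤ 0 := by
  unfold tt nrm cc; split_ifs with h
  · linarith
  · rw [inner_neg_right]; push_neg at h; linarith

lemma mem_hset_iff (o : Euc n) {y : Euc n} {H : Hyp n} : y ∈ hset H ↔ tt o y H = 0 := by
  unfold hset tt nrm cc
  split_ifs with h
  · simp only [Set.mem_setOf_eq, sub_eq_zero]
  · rw [inner_neg_right]; constructor
    · intro hy; simp only [Set.mem_setOf_eq] at hy; linarith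
    · intro hy; simp only [Set.mem_setOf_eq]; linarith

lemma tt_combo (o p q : Euc n) (H : Hyp n) {a b : ℝ} (hab : a + b = 1) :
    tt o (a • p + b • q) H = a * tt o p H + b * tt o q H := by
  unfold tt
  rw [inner_add_left, real_inner_smul_left, real_inner_smul_left]
  have : cc o H = (a + b) * cc o H := by rw [hab, one_mul]
  nlinarith [this]

lemma mem_meets_segment_iff {o x : Euc n} {H : Hyp n} (h : tt o o H < 0) :
    H ∈ meets (segment ℝ o x) ↔ 0 ≤ tt o x H := by
  constructor
  · rintro ⟨z, hz1, a, b, ha, hb, hab, rfl⟩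
    have hz0 : a * tt o o H + b * tt o x H = 0 := by
      rw [← tt_combo o o x H hab]; exact (mem_hset_iff o).1 hz1
    rcases eq_or_lt_of_le hb with hb0 | hb0
    · exfalso; rw [← hb0] at hz0 hab; simp at hz0 hab
      rcases hz0 with h1 | h1 <;> simp_all
    · nlinarith
  · intro hx
    set s : ℝ := tt o o H / (tt o o H - tt o x H) with hs
    have hden : tt o o H - tt o x H < 0 := by linarith
    have hs0 : 0 ≤ s := by
      exact div_nonneg_iff.mpr (Or.inr ⟨h.le, hden.le⟩)
    have hs1 : s ≤ 1 := by
      rw [div_le_one_iff]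
      exact Or.inr (Or.inr ⟨hden, by linarith⟩)
    refine ⟨(1 - s) • o + s • x, ?_, ⟨1 - s, s, by linarith, hs0, by ring, rfl⟩⟩
    rw [mem_hset_iff o, tt_combo o o x H (by ring)]
    have : s * (tt o o H - tt o x H) = tt o o H := div_mul_cancel₀ _ hden.ne
    nlinarith


-- set characterizations
lemma meets_singleton (o : Euc n) : meets {o} = {H : Hyp n | tt o o H = 0} := by
  ext H
  simp only [meets, Set.mem_setOf_eq, Set.inter_singleton_nonempty]
  exact mem_hset_iff o

lemma meets_seg_eq (o x : Euc n) :
    meets (segment ℝ o x)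
      = {H : Hyp n | tt o o H = 0} ∪ {H | tt o o H < 0 ∧ 0 ≤ tt o x H} := by
  ext H
  constructor
  · intro hH
    rcases lt_or_eq_of_le (tt_self_nonpos o H) with h | h
    · exact Or.inr ⟨h, (mem_meets_segment_iff h).1 hH⟩
    · exact Or.inl h
  · rintro (h | ⟨h1, h2⟩)
    · exact ⟨o, (mem_hset_iff o).2 h, left_mem_segment ℝ o x⟩
    · exact (mem_meets_segment_iff h1).2 h2

-- measurability
lemma meas_v : Measurable (fun H : Hyp n => H.1.1) :=
  measurable_fst.comp measurable_subtype_coe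
lemma meas_c : Measurable (fun H : Hyp n => H.1.2) :=
  measurable_snd.comp measurable_subtype_coe
lemma meas_inner_left (y : Euc n) : Measurable (fun H : Hyp n => (inner ℝ y H.1.1 : ℝ)) :=
  ((continuous_const.inner continuous_id).measurable).comp meas_v
lemma meas_cond (o : Euc n) : MeasurableSet {H : Hyp n | (inner ℝ o H.1.1 : ℝ) < H.1.2} :=
  measurableSet_lt (meas_inner_left o) meas_c
lemma meas_nrm (o : Euc n) : Measurable (nrm o) :=
  Measurable.ite (meas_cond o) meas_v meas_v.neg
lemma meas_cc (o : Euc n) : Measurable (cc o) :=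
  Measurable.ite (meas_cond o) meas_c meas_c.neg
lemma meas_tt (o y : Euc n) : Measurable (tt o y) :=
  (((continuous_const.inner continuous_id).measurable).comp (meas_nrm o)).sub (meas_cc o)
lemma meas_inner_nrm (o d : Euc n) : Measurable (fun H : Hyp n => (inner ℝ (nrm o H) d : ℝ)) :=
  ((continuous_id.inner continuous_const).measurable).comp (meas_nrm o)
lemma meas_meets_seg (o x : Euc n) : MeasurableSet (meets (segment ℝ o x)) := by
  rw [meets_seg_eq]
  exact ((meas_tt o o) (measurableSet_singleton 0)).union
    (((measurableSet_lt (meas_tt o o) measurable_const)).inter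
      (measurableSet_le measurable_const (meas_tt o x)))

lemma meas_uu (o y : Euc n) : Measurable (uu o y) := (meas_tt o y).max measurable_const

lemma norm_nrm' (o : Euc n) (H : Hyp n) : ‖nrm o H‖ = 1 := by
  unfold nrm; split_ifs <;> simp [H.2]

-- key pointwise inequality
lemma key (o x y : Euc n) (H : Hyp n) (h : tt o o H < 0) :
    Set.indicator (meets (segment ℝ o x)) (fun H => (inner ℝ (nrm o H) (y - x) : ℝ)) H
      ≤ uu o y H - uu o x H := by
  have hinner : (inner ℝ (nrm o H) (y - x) : ℝ) = tt o y H - tt o x H := by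
    rw [real_inner_comm, inner_sub_left]; unfold tt; ring
  by_cases hx : H ∈ meets (segment ℝ o x)
  · rw [Set.indicator_of_mem hx, hinner]
    have htx : 0 ≤ tt o x H := (mem_meets_segment_iff h).1 hx
    have h1 : uu o x H = tt o x H := max_eq_left htx
    have h2 : tt o y H ≤ uu o y H := le_max_left _ _
    linarith
  · rw [Set.indicator_of_notMem hx]
    have htx : tt o x H < 0 := by
      by_contra hc
      exact hx ((mem_meets_segment_iff h).2 (not_lt.1 hc))
    have h1 : uu o x H = 0 := max_eq_right htx.le
    have h2 : (0 : ℝ) ≤ uu o y H := le_max_right _ _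
    linarith

-- bound
lemma uu_bound (o y : Euc n) (H : Hyp n) (h : tt o o H < 0) :
    ‖uu o y H‖ ≤ 2 * ‖y‖ + ‖o‖ := by
  unfold uu
  rw [Real.norm_eq_abs, abs_of_nonneg (le_max_right _ _)]
  rcases le_or_gt (tt o y H) 0 with hy | hy
  · rw [max_eq_right hy]; positivity
  · rw [max_eq_left hy.le]
    obtain ⟨z, hz1, hz2⟩ := (mem_meets_segment_iff h).2 hy.le
    have hcc : |cc o H| ≤ ‖o‖ + ‖y‖ := by
      have hz : |(inner ℝ z H.1.1 : ℝ)| = |H.1.2| := by rw [hz1]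
      have h1 : |(inner ℝ z H.1.1 : ℝ)| ≤ ‖z‖ := by
        calc |(inner ℝ z H.1.1 : ℝ)| ≤ ‖z‖ * ‖H.1.1‖ := abs_real_inner_le_norm _ _
        _ = ‖z‖ := by rw [H.2, mul_one]
      have hzn : ‖z‖ ≤ ‖o‖ + ‖y‖ := by
        obtain ⟨a, b, ha, hb, hab, rfl⟩ := hz2
        calc ‖a • o + b • y‖ ≤ ‖a • o‖ + ‖b • y‖ := norm_add_le _ _
        _ = a * ‖o‖ + b * ‖y‖ := by rw [norm_smul, norm_smul, Real.norm_eq_abs,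
            Real.norm_eq_abs, abs_of_nonneg ha, abs_of_nonneg hb]
        _ ≤ ‖o‖ + ‖y‖ := by nlinarith [norm_nonneg o, norm_nonneg y]
      have : |cc o H| = |H.1.2| := by unfold cc; split_ifs <;> simp
      rw [this, ← hz]; linarith
    have hi : |(inner ℝ y (nrm o H) : ℝ)| ≤ ‖y‖ := by
      calc |(inner ℝ y (nrm o H) : ℝ)| ≤ ‖y‖ * ‖nrm o H‖ := abs_real_inner_le_norm _ _
      _ = ‖y‖ := by rw [norm_nrm', mul_one]
    unfold tt
    have := abs_sub_abs_le_abs_sub (inner ℝ y (nrm o H) : ℝ) (cc o H)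
    have habs : tt o y H ≤ |(inner ℝ y (nrm o H) : ℝ)| + |cc o H| := by
      unfold tt
      calc (inner ℝ y (nrm o H) : ℝ) - cc o H ≤ |(inner ℝ y (nrm o H) : ℝ) - cc o H| := le_abs_self _
      _ ≤ |(inner ℝ y (nrm o H) : ℝ)| + |cc o H| := abs_sub _ _
    unfold tt at habs
    linarith

lemma isCompact_seg (a b : Euc n) : IsCompact (segment ℝ a b) := by
  rw [segment_eq_image]
  exact (isCompact_Icc.image (by continuity))


end S9

/-- `f_ν` is cyclically monotone on `Ω`. -/
theorem stmt9 (n : ℕ) (hn : 2 ≤ n) (Ω : Set (Euc n)) (hΩo : IsOpen Ω) (hΩne : Ω.Nonempty)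
    (hΩc : Convex ℝ Ω) (ν : Measure (Hyp n))
    (hpt : ∀ p ∈ Ω, ν (meets {p}) = 0)
    (hseg : ∀ x ∈ Ω, ∀ y ∈ Ω, x ≠ y → 0 < ν (meets (segment ℝ x y)))
    (hcpt : ∀ K ⊆ Ω, IsCompact K → ν (meets K) < ⊤)
    (o : Euc n) (ho : o ∈ Ω)
    (m : ℕ) (hm : 2 ≤ m) (x : ℕ → Euc n) (hxΩ : ∀ k, x k ∈ Ω) (hcycle : x m = x 0) :
    ∑ k ∈ Finset.range m, (inner ℝ (fnu ν o (x k)) (x (k + 1) - x k) : ℝ) ≤ 0 := by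
  classical
  set π : ℕ → Set (Hyp n) := fun k => meets (segment ℝ o (x k)) with hπ
  set S : Set (Hyp n) := ⋃ k ∈ Finset.range (m+1), π k with hS
  have hπm : ∀ k, MeasurableSet (π k) := fun k => S9.meas_meets_seg o (x k)
  have hπfin : ∀ k, ν (π k) < ⊤ := fun k =>
    hcpt _ (hΩc.segment_subset ho (hxΩ k)) (S9.isCompact_seg o (x k))
  have hSm : MeasurableSet S :=
    MeasurableSet.biUnion (Finset.range (m+1)).countable_toSet (fun k _ => hπm k)
  have hSfin : ν S < ⊤ :=
    measure_biUnion_lt_top (Finset.range (m+1)).finite_toSet (fun k _ => hπfin k)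
  have hsub : ∀ k ≤ m, π k ⊆ S := fun k hk =>
    Set.subset_biUnion_of_mem
      (Finset.mem_coe.mpr (Finset.mem_range.mpr (Nat.lt_succ_of_le hk)))
  have hae : ∀ᵐ H ∂(ν.restrict S), S9.tt o o H < 0 := by
    apply ae_restrict_of_ae
    have h0 : ν {H : Hyp n | S9.tt o o H = 0} = 0 := by
      rw [← S9.meets_singleton]; exact hpt o ho
    rw [ae_iff]
    refine measure_mono_null ?_ h0
    intro H hH
    simp only [Set.mem_setOf_eq, not_lt] at hH
    exact le_antisymm (S9.tt_self_nonpos o H) hH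
  have hgint : ∀ j, IntegrableOn (S9.uu o (x j)) S ν := by
    intro j
    refine Integrable.mono' (integrableOn_const hSfin.ne :
        IntegrableOn (fun _ => 2 * ‖x j‖ + ‖o‖) S ν)
      ((S9.meas_uu o (x j)).aestronglyMeasurable) ?_
    filter_upwards [hae] with H hH
    exact S9.uu_bound o (x j) H hH
  have hindint : ∀ k, IntegrableOn
      (Set.indicator (π k) (fun H => (inner ℝ (nrm o H) (x (k+1) - x k) : ℝ))) S ν := by
    intro k
    refine Integrable.mono'
      (integrableOn_const hSfin.ne : IntegrableOn (fun _ => ‖x (k+1) - x k‖) S ν)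
      (((S9.meas_inner_nrm o (x (k+1) - x k)).indicator (hπm k)).aestronglyMeasurable) ?_
    refine Filter.Eventually.of_forall fun H => ?_
    calc ‖Set.indicator (π k) (fun H => (inner ℝ (nrm o H) (x (k+1) - x k) : ℝ)) H‖
        ≤ ‖(inner ℝ (nrm o H) (x (k+1) - x k) : ℝ)‖ := norm_indicator_le_norm_self _ _
      _ ≤ ‖nrm o H‖ * ‖x (k+1) - x k‖ := by
          rw [Real.norm_eq_abs]; exact abs_real_inner_le_norm _ _
      _ = ‖x (k+1) - x k‖ := by rw [S9.norm_nrm', one_mul]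
  have hnint : ∀ k, IntegrableOn (nrm o) (π k) ν := fun k =>
    Integrable.mono' (integrableOn_const (hπfin k).ne :
        IntegrableOn (fun _ => (1 : ℝ)) (π k) ν)
      ((S9.meas_nrm o).aestronglyMeasurable)
      (Filter.Eventually.of_forall fun H => le_of_eq (S9.norm_nrm' o H))
  have step1 : ∀ k, (inner ℝ (fnu ν o (x k)) (x (k+1) - x k) : ℝ)
      = ∫ H in π k, (inner ℝ (nrm o H) (x (k+1) - x k) : ℝ) ∂ν := by
    intro k
    rw [fnu, real_inner_comm, ← integral_inner (hnint k)]
    exact integral_congr_ae (Filter.Eventually.of_forall fun H => real_inner_comm _ _)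
  have step2 : ∀ k < m, (∫ H in π k, (inner ℝ (nrm o H) (x (k+1) - x k) : ℝ) ∂ν)
      = ∫ H in S, Set.indicator (π k) (fun H => (inner ℝ (nrm o H) (x (k+1) - x k) : ℝ)) H ∂ν := by
    intro k hk
    rw [setIntegral_indicator (hπm k), Set.inter_eq_self_of_subset_right (hsub k hk.le)]
  have step3 : ∀ k < m,
      (∫ H in S, Set.indicator (π k) (fun H => (inner ℝ (nrm o H) (x (k+1) - x k) : ℝ)) H ∂ν)
      ≤ (∫ H in S, S9.uu o (x (k+1)) H ∂ν) - ∫ H in S, S9.uu o (x k) H ∂ν := by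
    intro k hk
    rw [← integral_sub (hgint (k+1)) (hgint k)]
    refine integral_mono_ae (hindint k) ((hgint (k+1)).sub (hgint k)) ?_
    filter_upwards [hae] with H hH
    exact S9.key o (x k) (x (k+1)) H hH
  calc ∑ k ∈ Finset.range m, (inner ℝ (fnu ν o (x k)) (x (k + 1) - x k) : ℝ)
      ≤ ∑ k ∈ Finset.range m,
          ((∫ H in S, S9.uu o (x (k+1)) H ∂ν) - ∫ H in S, S9.uu o (x k) H ∂ν) := by
        refine Finset.sum_le_sum fun k hk => ?_
        rw [step1 k, step2 k (Finset.mem_range.1 hk)]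
        exact step3 k (Finset.mem_range.1 hk)
    _ = (∫ H in S, S9.uu o (x m) H ∂ν) - ∫ H in S, S9.uu o (x 0) H ∂ν :=
        Finset.sum_range_sub (fun j => ∫ H in S, S9.uu o (x j) H ∂ν) m
    _ = 0 := by rw [hcycle]; ring
end
end

section
/- Let Q ⊂ ℝⁿ be a cube with edge length a, and let H be a hyperplane intersecting Q but containing no vertex of Q. Then there exist two vertices x, y of Q separated by H such that the angle α(x−y, H) satisfies sin α(x−y, H) ≥ 1/√n. -/
open MeasureTheory Set

noncomputable section

/-- The axis-parallel closed cube with lower corner `b` and edge length `a`. -/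
def cube {n : ℕ} (b : Euc n) (a : ℝ) : Set (Euc n) :=
  {z | ∀ i, z i ∈ Icc (b i) (b i + a)}

/-- `x` is a vertex of the cube `cube b a`. -/
def IsVertex {n : ℕ} (b : Euc n) (a : ℝ) (x : Euc n) : Prop :=
  ∀ i, x i = b i ∨ x i = b i + a

/-- The hyperplane `H` (strictly) separates the points `x` and `y`. -/
def Separates {n : ℕ} (H : Hyp n) (x y : Euc n) : Prop :=
  ((inner ℝ x H.1.1 : ℝ) - H.1.2) * ((inner ℝ y H.1.1 : ℝ) - H.1.2) < 0

set_option maxHeartbeats 1000000 in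
/-- a hyperplane meeting a cube but containing none of its vertices separates
two vertices `x, y` with `sin α(x−y, H) ≥ 1/√n`. -/
theorem stmt13 (n : ℕ) (hn : 2 ≤ n) (b : Euc n) (a : ℝ) (ha : 0 < a) (H : Hyp n)
    (hmeet : (hset H ∩ cube b a).Nonempty)
    (hvert : ∀ x, IsVertex b a x → x ∉ hset H) :
    ∃ x y, IsVertex b a x ∧ IsVertex b a y ∧ Separates H x y ∧
      1 / Real.sqrt n ≤ sinA (x - y) H := by
  classical
  obtain ⟨z, hzH, hzC⟩ := hmeet
  set v : Euc n := H.1.1 with hv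
  set c : ℝ := H.1.2 with hc
  have hvnorm : ‖v‖ = 1 := H.2
  set x : Euc n := WithLp.toLp 2 (fun i => if 0 ≤ v i then b i + a else b i) with hx
  set y : Euc n := WithLp.toLp 2 (fun i => if 0 ≤ v i then b i else b i + a) with hy
  have hxv : IsVertex b a x := fun i => by
    by_cases h : 0 ≤ v i <;> simp [hx, h]
  have hyv : IsVertex b a y := fun i => by
    by_cases h : 0 ≤ v i <;> simp [hy, h]
  have hinner : ∀ w : Euc n, (inner ℝ w v : ℝ) = ∑ i, w i * v i := fun w => by
    simp [PiLp.inner_apply, mul_comm]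
  have hz0 : (inner ℝ z v : ℝ) = c := hzH
  have hzc : ∀ i, z i ∈ Icc (b i) (b i + a) := hzC
  have hxz : (inner ℝ z v : ℝ) ≤ inner ℝ x v := by
    rw [hinner, hinner]
    apply Finset.sum_le_sum
    intro i _
    by_cases h : 0 ≤ v i
    · simp only [hx, h, if_true]
      exact mul_le_mul_of_nonneg_right (hzc i).2 h
    · simp only [hx, h, if_false]
      nlinarith [(hzc i).1, le_of_not_ge h]
  have hyz : (inner ℝ y v : ℝ) ≤ inner ℝ z v := by
    rw [hinner, hinner]
    apply Finset.sum_le_sum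
    intro i _
    by_cases h : 0 ≤ v i
    · simp only [hy, h, if_true]
      exact mul_le_mul_of_nonneg_right (hzc i).1 h
    · simp only [hy, h, if_false]
      nlinarith [(hzc i).2, le_of_not_ge h]
  have hxne : (inner ℝ x v : ℝ) ≠ c := fun h => hvert x hxv h
  have hyne : (inner ℝ y v : ℝ) ≠ c := fun h => hvert y hyv h
  have hxpos : 0 < (inner ℝ x v : ℝ) - c := by
    rw [hz0] at hxz
    cases lt_or_eq_of_le hxz with
    | inl h => linarith
    | inr h => exact absurd h.symm hxne
  have hyneg : (inner ℝ y v : ℝ) - c < 0 := by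
    rw [hz0] at hyz
    cases lt_or_eq_of_le hyz with
    | inl h => linarith
    | inr h => exact absurd h hyne
  refine ⟨x, y, hxv, hyv, mul_neg_of_pos_of_neg hxpos hyneg, ?_⟩
  have hxy : ∀ i, (x - y) i = if 0 ≤ v i then a else -a := by
    intro i
    have : (x - y) i = x i - y i := rfl
    rw [this]
    by_cases h : 0 ≤ v i <;> simp [hx, hy, h] <;> ring
  have hip : (inner ℝ (x - y) v : ℝ) = a * ∑ i, |v i| := by
    rw [hinner, Finset.mul_sum]
    apply Finset.sum_congr rfl
    intro i _
    rw [hxy i]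
    by_cases h : 0 ≤ v i
    · simp [h, abs_of_nonneg h]
    · rw [if_neg h, abs_of_neg (lt_of_not_ge h)]; ring
  have hnpos : (0:ℝ) < Real.sqrt n := by
    apply Real.sqrt_pos.2
    exact_mod_cast Nat.lt_of_lt_of_le (by norm_num) hn
  have hnorm : ‖x - y‖ = a * Real.sqrt n := by
    rw [EuclideanSpace.norm_eq]
    have habs : ∀ i, ‖(x - y) i‖ ^ 2 = a ^ 2 := by
      intro i
      rw [hxy i]
      by_cases h : 0 ≤ v i <;> simp [h] <;> ring
    rw [Finset.sum_congr rfl (fun i _ => habs i)]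
    rw [Finset.sum_const, Finset.card_univ, Fintype.card_fin, nsmul_eq_mul]
    rw [show (n : ℝ) * a ^ 2 = a ^ 2 * n by ring, Real.sqrt_mul (sq_nonneg a),
      Real.sqrt_sq ha.le]
  have hsum : (1:ℝ) ≤ ∑ i, |v i| := by
    have h2 : ∑ i, v i ^ 2 = 1 := by
      have := hvnorm
      rw [EuclideanSpace.norm_eq] at this
      have h1 : ∑ i, ‖v i‖ ^ 2 = 1 := by
        nlinarith [Real.sq_sqrt (Finset.sum_nonneg (fun i _ => sq_nonneg ‖v i‖) :
          (0:ℝ) ≤ ∑ i, ‖v i‖ ^ 2), this]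
      simpa [sq_abs] using h1
    set S := ∑ i, |v i| with hS
    have hS0 : 0 ≤ S := Finset.sum_nonneg fun i _ => abs_nonneg _
    have hle : ∑ i, v i ^ 2 ≤ S * S := by
      have step : ∑ i, v i ^ 2 ≤ ∑ i, |v i| * S := by
        apply Finset.sum_le_sum
        intro i _
        have h1 : |v i| ≤ S := Finset.single_le_sum (fun j _ => abs_nonneg (v j))
          (Finset.mem_univ i)
        calc v i ^ 2 = |v i| * |v i| := by rw [← abs_mul, ← sq, abs_sq]
          _ ≤ |v i| * S := mul_le_mul_of_nonneg_left h1 (abs_nonneg _)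
      calc ∑ i, v i ^ 2 ≤ ∑ i, |v i| * S := step
        _ = S * S := by rw [← Finset.sum_mul]
    nlinarith
  rw [sinA, hip, hnorm, abs_of_nonneg (by positivity : (0:ℝ) ≤ a * ∑ i, |v i|)]
  rw [div_le_div_iff₀ hnpos (by positivity)]
  have : a * ∑ i, |v i| ≥ a * 1 := mul_le_mul_of_nonneg_left hsum ha.le
  nlinarith
end
end

section
/- Every ν-measurable set of hyperplanes meeting a cube Q ⊂ Ω can, up to a ν-null set, be covered by the sets S_{x,y} over pairs of vertices {x,y} of Q, where S_{x,y} is the set of hyperplanes separating x from y with sin α(x−y,H) ≥ 1/√n; consequently there exists a pair of vertices {x,y} with ν(S_{x,y}) ≥ 4^{-n} ν(πQ). -/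
open MeasureTheory Set

noncomputable section

/-- The set `S_{x,y}` of hyperplanes separating `x` from `y` and making angle at least
`arcsin (1/√n)` with the line through `x` and `y`. -/
def Sset {n : ℕ} (x y : Euc n) : Set (Hyp n) :=
  {H | Separates H x y ∧ 1 / Real.sqrt n ≤ sinA (x - y) H}

section Aux
variable {n : ℕ}

lemma inner_euc (x y : Euc n) : (inner ℝ x y : ℝ) = ∑ i, x i * y i := by
  simp [PiLp.inner_apply, RCLike.inner_apply, conj_trivial, mul_comm]

lemma norm_euc (x : Euc n) : ‖x‖ = Real.sqrt (∑ i, (x i)^2) := by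
  rw [EuclideanSpace.norm_eq]; congr 1; exact Finset.sum_congr rfl fun i _ => sq_abs _

/-- Key covering lemma: a hyperplane meeting the cube but avoiding all vertices lies in
some `Sset x y` for vertices `x`, `y`. -/
lemma cover (hn : 2 ≤ n) (b : Euc n) (a : ℝ) (ha : 0 < a) (H : Hyp n)
    (hH : H ∈ meets (cube b a))
    (hnv : ∀ p, IsVertex b a p → H ∉ meets {p}) :
    ∃ x y, IsVertex b a x ∧ IsVertex b a y ∧ H ∈ Sset x y := by
  obtain ⟨z, hzH, hz⟩ := hH
  set v := H.1.1 with hv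
  set c := H.1.2 with hc
  have hzc : (inner ℝ z v : ℝ) = c := hzH
  set x : Euc n := WithLp.toLp 2 (fun i => if 0 ≤ v i then b i else b i + a) with hxdef
  set y : Euc n := WithLp.toLp 2 (fun i => if 0 ≤ v i then b i + a else b i) with hydef
  have hxv : IsVertex b a x := by
    intro i; by_cases h : 0 ≤ v i <;> simp [hxdef, h, PiLp.toLp_apply]
  have hyv : IsVertex b a y := by
    intro i; by_cases h : 0 ≤ v i <;> simp [hydef, h, PiLp.toLp_apply]
  have hne : ∀ p, IsVertex b a p → (inner ℝ p v : ℝ) ≠ c := by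
    intro p hp heq
    exact hnv p hp ⟨p, heq, rfl⟩
  have hxle : (inner ℝ x v : ℝ) ≤ inner ℝ z v := by
    rw [inner_euc, inner_euc]
    apply Finset.sum_le_sum
    intro i _
    by_cases h : 0 ≤ v i
    · simp only [hxdef, PiLp.toLp_apply, if_pos h]
      exact mul_le_mul_of_nonneg_right (hz i).1 h
    · simp only [hxdef, PiLp.toLp_apply, if_neg h]
      exact mul_le_mul_of_nonpos_right (hz i).2 (le_of_not_ge h)
  have hyge : (inner ℝ z v : ℝ) ≤ inner ℝ y v := by
    rw [inner_euc, inner_euc]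
    apply Finset.sum_le_sum
    intro i _
    by_cases h : 0 ≤ v i
    · simp only [hydef, PiLp.toLp_apply, if_pos h]
      exact mul_le_mul_of_nonneg_right (hz i).2 h
    · simp only [hydef, PiLp.toLp_apply, if_neg h]
      exact mul_le_mul_of_nonpos_right (hz i).1 (le_of_not_ge h)
  have hxlt : (inner ℝ x v : ℝ) < c := lt_of_le_of_ne (hzc ▸ hxle) (hne x hxv)
  have hylt : c < (inner ℝ y v : ℝ) := lt_of_le_of_ne (hzc ▸ hyge) (Ne.symm (hne y hyv))
  refine ⟨x, y, hxv, hyv, ?_, ?_⟩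
  · exact mul_neg_of_neg_of_pos (sub_neg.2 hxlt) (sub_pos.2 hylt)
  · have hxyi : ∀ i, (x - y) i = if 0 ≤ v i then -a else a := by
      intro i
      have : (x - y) i = x i - y i := rfl
      rw [this]; by_cases h : 0 ≤ v i <;> simp [hxdef, hydef, h, PiLp.toLp_apply]
    have hsum1 : (∑ i, (v i)^2) = 1 := by
      have h1 : ‖v‖ = 1 := H.2
      rw [norm_euc] at h1
      have := Real.sqrt_eq_one.mp h1
      linarith
    have habs : ∀ i, |v i| ≤ 1 := by
      intro i
      have h2 : (v i)^2 ≤ 1 := by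
        rw [← hsum1]
        exact Finset.single_le_sum (fun j _ => sq_nonneg (v j)) (Finset.mem_univ i)
      nlinarith [abs_nonneg (v i), sq_abs (v i)]
    have hS1 : 1 ≤ ∑ i, |v i| := by
      rw [← hsum1]
      apply Finset.sum_le_sum
      intro i _
      nlinarith [sq_abs (v i), habs i, abs_nonneg (v i)]
    have hinner : (inner ℝ (x - y) v : ℝ) = -(a * ∑ i, |v i|) := by
      rw [inner_euc, Finset.mul_sum, ← Finset.sum_neg_distrib]
      apply Finset.sum_congr rfl
      intro i _
      rw [hxyi i]
      by_cases h : 0 ≤ v i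
      · rw [if_pos h, abs_of_nonneg h]; ring
      · rw [if_neg h, abs_of_neg (lt_of_not_ge h)]; ring
    have hnxy : ‖x - y‖ = a * Real.sqrt n := by
      rw [norm_euc]
      have : ∀ i : Fin n, ((x - y) i)^2 = a^2 := by
        intro i; rw [hxyi i]; by_cases h : 0 ≤ v i <;> simp [h]
      rw [Finset.sum_congr rfl fun i _ => this i]
      rw [Finset.sum_const, Finset.card_univ, Fintype.card_fin, nsmul_eq_mul]
      rw [Real.sqrt_mul (by positivity), Real.sqrt_sq ha.le, mul_comm]
    have hsqn : (0:ℝ) < Real.sqrt n := Real.sqrt_pos.mpr (by positivity)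
    show 1 / Real.sqrt n ≤ sinA (x - y) H
    unfold sinA
    rw [hinner, hnxy, abs_neg, abs_of_nonneg (by positivity)]
    rw [mul_div_mul_left _ _ (ne_of_gt ha)]
    exact div_le_div_of_nonneg_right hS1 hsqn.le

/-- Enumeration of vertices by boolean vectors. -/
def vert (b : Euc n) (a : ℝ) (s : Fin n → Bool) : Euc n :=
  WithLp.toLp 2 (fun i => if s i then b i + a else b i)

lemma vert_isVertex (b : Euc n) (a : ℝ) (s : Fin n → Bool) : IsVertex b a (vert b a s) := by
  intro i; by_cases h : s i <;> simp [vert, h, PiLp.toLp_apply]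

open Classical in
lemma isVertex_eq_vert {b : Euc n} {a : ℝ} {x : Euc n} (hx : IsVertex b a x) :
    ∃ s, x = vert b a s := by
  refine ⟨fun i => decide (x i = b i + a), PiLp.ext fun i => ?_⟩
  by_cases h : x i = b i + a
  · simp [vert, h, PiLp.toLp_apply]
  · rcases hx i with h' | h'
    · have hd : decide (x i = b i + a) = false := by simp [h]
      simp only [vert, PiLp.toLp_apply]
      rw [hd]
      simpa using h'
    · exact absurd h' h

lemma vertex_countable (b : Euc n) (a : ℝ) : {v : Euc n | IsVertex b a v}.Countable := by
  apply Set.Countable.mono _ (Set.countable_range (vert b a))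
  rintro x hx
  obtain ⟨s, rfl⟩ := isVertex_eq_vert hx
  exact mem_range_self s

lemma vertex_mem_cube {b : Euc n} {a : ℝ} (ha : 0 < a) {x : Euc n} (hx : IsVertex b a x) :
    x ∈ cube b a := by
  intro i
  rcases hx i with h | h <;> rw [h] <;> constructor <;> linarith

end Aux

/-- up to a `ν`-null set, `π Q` is covered by the sets `S_{x,y}` over pairs of
vertices of the cube `Q`; consequently some pair of distinct vertices `x, y` satisfies
`ν(S_{x,y}) ≥ 4⁻ⁿ ν(π Q)`. -/
theorem stmt15 (n : ℕ) (hn : 2 ≤ n) (Ω : Set (Euc n)) (hΩo : IsOpen Ω) (hΩne : Ω.Nonempty)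
    (hΩc : Convex ℝ Ω) (ν : Measure (Hyp n))
    (hpt : ∀ p ∈ Ω, ν (meets {p}) = 0)
    (b : Euc n) (a : ℝ) (ha : 0 < a) (hQ : cube b a ⊆ Ω) :
    ν (meets (cube b a) \
        ⋃ x ∈ {v | IsVertex b a v}, ⋃ y ∈ {v | IsVertex b a v}, Sset x y) = 0 ∧
    ∃ x y, IsVertex b a x ∧ IsVertex b a y ∧ x ≠ y ∧
      ν (meets (cube b a)) ≤ 4 ^ n * ν (Sset x y) := by
  set U : Set (Hyp n) := ⋃ x ∈ {v | IsVertex b a v}, ⋃ y ∈ {v | IsVertex b a v}, Sset x y with hU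
  have hnull : ν (⋃ p ∈ {v : Euc n | IsVertex b a v}, meets {p}) = 0 := by
    rw [measure_biUnion_null_iff (vertex_countable b a)]
    intro p hp
    exact hpt p (hQ (vertex_mem_cube ha hp))
  have h1 : ν (meets (cube b a) \ U) = 0 := by
    apply measure_mono_null _ hnull
    rintro H ⟨hHm, hHU⟩
    by_cases hex : ∃ p, IsVertex b a p ∧ H ∈ meets {p}
    · obtain ⟨p, hp, hm⟩ := hex
      exact mem_biUnion hp hm
    · push_neg at hex
      obtain ⟨x, y, hx, hy, hS⟩ := cover hn b a ha H hHm hex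
      exact absurd (mem_iUnion₂.2 ⟨x, hx, mem_iUnion₂.2 ⟨y, hy, hS⟩⟩) hHU
  refine ⟨h1, ?_⟩
  have h2 : ν (meets (cube b a)) ≤ ν U := by
    calc ν (meets (cube b a)) ≤ ν (U ∪ (meets (cube b a) \ U)) := by
          apply measure_mono
          intro H h
          by_cases hUu : H ∈ U
          · exact Or.inl hUu
          · exact Or.inr ⟨h, hUu⟩
      _ ≤ ν U + ν (meets (cube b a) \ U) := measure_union_le _ _
      _ = ν U := by rw [h1, add_zero]
  have h3 : ν U ≤ ∑' p : (Fin n → Bool) × (Fin n → Bool),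
      ν (Sset (vert b a p.1) (vert b a p.2)) := by
    refine le_trans (measure_mono ?_) (measure_iUnion_le _)
    intro H hH
    simp only [hU, mem_iUnion] at hH ⊢
    obtain ⟨x, hx, y, hy, hS⟩ := hH
    obtain ⟨s, rfl⟩ := isVertex_eq_vert hx
    obtain ⟨t, rfl⟩ := isVertex_eq_vert hy
    exact ⟨(s, t), hS⟩
  rw [tsum_fintype] at h3
  obtain ⟨p0, -, hmax⟩ := Finset.exists_max_image Finset.univ
    (fun p : (Fin n → Bool) × (Fin n → Bool) => ν (Sset (vert b a p.1) (vert b a p.2)))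
    Finset.univ_nonempty
  have hcard : Fintype.card ((Fin n → Bool) × (Fin n → Bool)) = 4 ^ n := by
    rw [Fintype.card_prod, Fintype.card_fun, Fintype.card_bool, Fintype.card_fin, ← mul_pow]
    norm_num
  have h4 : ν (meets (cube b a)) ≤ 4 ^ n * ν (Sset (vert b a p0.1) (vert b a p0.2)) := by
    have hsum := Finset.sum_le_card_nsmul Finset.univ
      (fun p : (Fin n → Bool) × (Fin n → Bool) => ν (Sset (vert b a p.1) (vert b a p.2)))
      (ν (Sset (vert b a p0.1) (vert b a p0.2))) (fun p _ => hmax p (Finset.mem_univ p))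
    rw [Finset.card_univ, hcard, nsmul_eq_mul] at hsum
    calc ν (meets (cube b a)) ≤ _ := h2.trans h3
      _ ≤ _ := hsum
      _ = 4 ^ n * ν (Sset (vert b a p0.1) (vert b a p0.2)) := by push_cast; ring
  by_cases h0 : ν (Sset (vert b a p0.1) (vert b a p0.2)) = 0
  · have hzero : ν (meets (cube b a)) = 0 := by
      refine le_antisymm ?_ zero_le
      rw [h0, mul_zero] at h4
      exact h4
    refine ⟨vert b a (fun _ => false), vert b a (fun _ => true),
      vert_isVertex b a _, vert_isVertex b a _, ?_, by rw [hzero]; exact zero_le⟩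
    intro he
    have := congrArg (fun w : Euc n => w ⟨0, by omega⟩) he
    simp only [vert, PiLp.toLp_apply] at this
    simp at this
    linarith
  · obtain ⟨H, hsep, -⟩ := nonempty_of_measure_ne_zero h0
    refine ⟨vert b a p0.1, vert b a p0.2, vert_isVertex b a _, vert_isVertex b a _, ?_, h4⟩
    intro he
    rw [he] at hsep
    exact absurd hsep (not_lt.mpr (mul_self_nonneg _))
end
end

section
/- Let μ be a nonatomic Radon measure on ℝⁿ whose support is not contained in any line and which satisfies 0 < ∫ |x|^{-1} dμ(x) < ∞. Let ν = Φ_*(μ × ω), where ω is the normalized volume measure on S^{n−1} and Φ(a,v) = {x : ⟨x,v⟩ = ⟨a,v⟩}. Then ν satisfies: ν(π{p}) = 0 for every point p, ν(πS) > 0 for every nondegenerate segment S, and ν(πK) < ∞ for every compact set K. -/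
open MeasureTheory Set

noncomputable section

/-- The normalized volume measure on the unit sphere `S^{n-1}`. -/
def sphOmega (n : ℕ) : Measure (Metric.sphere (0 : Euc n) 1) :=
  (((volume : Measure (Euc n)).toSphere) Set.univ)⁻¹ • ((volume : Measure (Euc n)).toSphere)

/-- `Φ(a, v)` is the hyperplane through `a` with unit normal `v`. -/
def PhiMap {n : ℕ} (p : Euc n × Metric.sphere (0 : Euc n) 1) : Hyp n :=
  ⟨((p.2 : Euc n), (inner ℝ p.1 (p.2 : Euc n) : ℝ)),
    mem_sphere_zero_iff_norm.mp p.2.2⟩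

/-- The pushforward measure `ν = Φ_*(μ × ω)` on the space of hyperplanes. -/
def nuPush {n : ℕ} (μ : Measure (Euc n)) : Measure (Hyp n) :=
  Measure.map PhiMap (μ.prod (sphOmega n))

open Metric Pointwise
open scoped RealInnerProductSpace ENNReal

namespace Stmt16Aux

variable {n : ℕ}


lemma continuous_PhiMap : Continuous (PhiMap (n := n)) := by
  apply Continuous.subtype_mk
  exact (continuous_subtype_val.comp continuous_snd).prodMk
    (continuous_inner.comp (continuous_fst.prodMk (continuous_subtype_val.comp continuous_snd)))

lemma isClosed_meets {K : Set (Euc n)} (hK : IsCompact K) : IsClosed (meets K) := by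
  have hrw : meets K = Prod.snd ''
      {p : K × Hyp n | (inner ℝ (p.1 : Euc n) p.2.1.1 : ℝ) = p.2.1.2} := by
    ext H
    simp only [meets, mem_setOf_eq, mem_image]
    constructor
    · rintro ⟨z, hz1, hz2⟩
      exact ⟨⟨⟨z, hz2⟩, H⟩, hz1, rfl⟩
    · rintro ⟨⟨⟨z, hz⟩, H'⟩, h1, rfl⟩
      exact ⟨z, h1, hz⟩
  rw [hrw]
  haveI : CompactSpace K := isCompact_iff_compactSpace.mp hK
  apply isClosedMap_snd_of_compactSpace
  exact isClosed_eq
    (continuous_inner.comp ((continuous_subtype_val.comp continuous_fst).prodMk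
      (continuous_fst.comp (continuous_subtype_val.comp continuous_snd))))
    (continuous_snd.comp (continuous_subtype_val.comp continuous_snd))

lemma mem_meets_iff (A : Set (Euc n)) (a : Euc n) (v : Metric.sphere (0 : Euc n) 1) :
    PhiMap (a, v) ∈ meets A ↔ ∃ z ∈ A, (inner ℝ z (v : Euc n) : ℝ) = inner ℝ a (v : Euc n) := by
  constructor
  · rintro ⟨z, hz1, hz2⟩
    exact ⟨z, hz2, hz1⟩
  · rintro ⟨z, hz1, hz2⟩
    exact ⟨z, hz2, hz1⟩



lemma toSphere_univ_pos (hn : 1 ≤ n) : 0 < (volume : Measure (Euc n)).toSphere univ := by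
  rw [Measure.toSphere_apply_univ]
  apply ENNReal.mul_pos
  · simp [finrank_euclideanSpace_fin]
    omega
  · exact (measure_ball_pos volume 0 one_pos).ne'

lemma toSphere_univ_ne_top : (volume : Measure (Euc n)).toSphere univ ≠ ⊤ :=
  measure_ne_top _ _

lemma sphOmega_apply (s : Set (Metric.sphere (0 : Euc n) 1)) :
    sphOmega n s = ((volume : Measure (Euc n)).toSphere univ)⁻¹ *
      (volume : Measure (Euc n)).toSphere s := rfl

lemma isFiniteMeasure_sphOmega (hn : 1 ≤ n) : IsFiniteMeasure (sphOmega n) := by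
  constructor
  rw [sphOmega_apply]
  rw [ENNReal.inv_mul_cancel (toSphere_univ_pos hn).ne' toSphere_univ_ne_top]
  exact ENNReal.one_lt_top



lemma coord_le_norm (y : Euc n) (i : Fin n) : |y i| ≤ ‖y‖ := by
  have h1 : |y i| ^ 2 ≤ ∑ j, ‖y j‖ ^ 2 := by
    have := Finset.single_le_sum (f := fun j => ‖y j‖ ^ 2)
      (fun j _ => by positivity) (Finset.mem_univ i)
    simpa [sq_abs] using this
  have h2 : ‖y‖ = Real.sqrt (∑ j, ‖y j‖ ^ 2) := EuclideanSpace.norm_eq y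
  rw [h2]
  have := Real.sqrt_le_sqrt h1
  rwa [Real.sqrt_sq (abs_nonneg _)] at this

lemma volume_slab (hn : 1 ≤ n) (u : Euc n) (hu : ‖u‖ = 1) {ε : ℝ} (hε : 0 ≤ ε) :
    volume {x : Euc n | ‖x‖ ≤ 1 ∧ |(inner ℝ u x : ℝ)| ≤ ε} ≤ ENNReal.ofReal ε * 2 ^ (n + 1) := by
  haveI : NeZero n := ⟨by omega⟩
  set i0 : Fin n := ⟨0, by omega⟩ with hi0
  have hcard : Module.finrank ℝ (Euc n) = Fintype.card (Fin n) := by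
    simp [finrank_euclideanSpace_fin]
  have horth : Orthonormal ℝ (({i0} : Set (Fin n)).restrict (fun _ : Fin n => u)) := by
    rw [orthonormal_iff_ite]
    rintro ⟨i, hi⟩ ⟨j, hj⟩
    have hij : i = j := by
      simp only [mem_singleton_iff] at hi hj; rw [hi, hj]
    subst hij
    rw [if_pos rfl]
    change inner ℝ u u = (1:ℝ)
    rw [real_inner_self_eq_norm_mul_norm, hu]
    norm_num
  obtain ⟨b, hb⟩ := horth.exists_orthonormalBasis_extension_of_card_eq hcard
  have hbu : b i0 = u := hb i0 rfl
  set T : Set (Euc n) := {y | ‖y‖ ≤ 1 ∧ |y i0| ≤ ε} with hT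
  have hTmeas : MeasurableSet T := by
    apply MeasurableSet.inter
    · exact measurableSet_le measurable_norm measurable_const
    · exact measurableSet_le
        ((EuclideanSpace.proj (𝕜 := ℝ) i0).continuous.measurable.abs) measurable_const
  have hpre : {x : Euc n | ‖x‖ ≤ 1 ∧ |(inner ℝ u x : ℝ)| ≤ ε} = b.repr ⁻¹' T := by
    ext x
    simp only [mem_setOf_eq, mem_preimage, hT, b.repr.norm_map,
      OrthonormalBasis.repr_apply_apply, hbu]
  rw [hpre, (b.measurePreserving_repr).measure_preimage hTmeas.nullMeasurableSet]
  -- bound T by a box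
  set c : Fin n → ℝ := fun i => if i = i0 then ε else 1 with hc
  have hTP : T ⊆ (MeasurableEquiv.toLp 2 (Fin n → ℝ)).symm ⁻¹'
      (Set.pi univ fun i => Icc (-(c i)) (c i)) := by
    intro y hy
    simp only [mem_preimage, mem_pi, mem_univ, forall_true_left, mem_Icc]
    intro i
    have hyi : |(y : Euc n) i| ≤ c i := by
      by_cases hii : i = i0
      · subst hii; simpa [hc] using hy.2
      · simp only [hc, if_neg hii]
        exact (coord_le_norm y i).trans hy.1
    have : |(MeasurableEquiv.toLp 2 (Fin n → ℝ)).symm y i| ≤ c i := hyi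
    constructor <;> [linarith [neg_abs_le ((MeasurableEquiv.toLp 2 (Fin n → ℝ)).symm y i)];
      linarith [le_abs_self ((MeasurableEquiv.toLp 2 (Fin n → ℝ)).symm y i)]]
  have hvol := (EuclideanSpace.volume_preserving_symm_measurableEquiv_toLp (Fin n)).measure_preimage
    (MeasurableSet.univ_pi fun i => measurableSet_Icc).nullMeasurableSet
    (s := Set.pi univ fun i => Icc (-(c i)) (c i))
  calc volume T ≤ volume ((MeasurableEquiv.toLp 2 (Fin n → ℝ)).symm ⁻¹'
        (Set.pi univ fun i => Icc (-(c i)) (c i))) := measure_mono hTP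
    _ = ∏ i, volume (Icc (-(c i)) (c i)) := by rw [hvol, volume_pi_pi]
    _ = ∏ i, ENNReal.ofReal (2 * c i) := by
        congr 1; ext i; rw [Real.volume_Icc]; ring_nf
    _ ≤ ENNReal.ofReal ε * 2 ^ (n + 1) := by
        rw [← Finset.mul_prod_erase Finset.univ _ (Finset.mem_univ i0)]
        have h1 : ENNReal.ofReal (2 * c i0) = 2 * ENNReal.ofReal ε := by
          simp [hc, ENNReal.ofReal_mul (by norm_num : (0:ℝ) ≤ 2)]
        have h2 : ∏ i ∈ Finset.univ.erase i0, ENNReal.ofReal (2 * c i)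
            = 2 ^ (Finset.univ.erase i0).card := by
          rw [Finset.prod_congr rfl (fun i hi => ?_), Finset.prod_const]
          rw [hc]; simp [Finset.mem_erase.mp hi |>.1]
        rw [h1, h2]
        have hcard2 : (Finset.univ.erase i0).card ≤ n + 1 := by
          have := Finset.card_erase_le (a := i0) (s := (Finset.univ : Finset (Fin n)))
          simp only [Finset.card_univ, Fintype.card_fin] at this
          omega
        calc 2 * ENNReal.ofReal ε * 2 ^ (Finset.univ.erase i0).card
            ≤ 2 * ENNReal.ofReal ε * 2 ^ n := by
              gcongr
              · norm_num
              · have := Finset.card_erase_le (a := i0) (s := (Finset.univ : Finset (Fin n)))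
                simp only [Finset.card_univ, Fintype.card_fin] at this
                exact this.trans (Nat.le_refl n) |>.trans (le_refl n)
          _ = ENNReal.ofReal ε * 2 ^ (n + 1) := by ring



lemma sphOmega_apply' (s : Set (Metric.sphere (0 : Euc n) 1)) :
    sphOmega n s = ((volume : Measure (Euc n)).toSphere univ)⁻¹ *
      (volume : Measure (Euc n)).toSphere s := rfl


lemma toSphere_band_le (hn : 1 ≤ n) (u : Euc n) (hu : ‖u‖ = 1) {ε : ℝ} (hε : 0 ≤ ε) :
    (volume : Measure (Euc n)).toSphere
      {v : Metric.sphere (0 : Euc n) 1 | |(inner ℝ u (v : Euc n) : ℝ)| ≤ ε} ≤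
      n * (ENNReal.ofReal ε * 2 ^ (n + 1)) := by
  set B := {v : Metric.sphere (0 : Euc n) 1 | |(inner ℝ u (v : Euc n) : ℝ)| ≤ ε} with hB
  have hBmeas : MeasurableSet B := by
    apply IsClosed.measurableSet
    exact isClosed_le ((continuous_const.inner continuous_subtype_val).abs) continuous_const
  rw [Measure.toSphere_apply' _ hBmeas]
  have hdim : Module.finrank ℝ (Euc n) = n := finrank_euclideanSpace_fin
  rw [hdim]
  gcongr
  refine (measure_mono ?_).trans (volume_slab hn u hu hε)
  rintro x hx
  rw [Set.mem_smul] at hx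
  obtain ⟨r, hr, y, hy, rfl⟩ := hx
  obtain ⟨v, hvB, rfl⟩ := hy
  have hv1 : ‖(v : Euc n)‖ = 1 := mem_sphere_zero_iff_norm.mp v.2
  have hr0 : 0 < r := hr.1
  have hr1 : r < 1 := hr.2
  constructor
  · rw [norm_smul, hv1, Real.norm_eq_abs, abs_of_pos hr0]
    simpa using hr1.le
  · rw [real_inner_smul_right, abs_mul, abs_of_pos hr0]
    calc r * |(inner ℝ u (v : Euc n) : ℝ)| ≤ 1 * ε := by
          apply mul_le_mul hr1.le hvB (abs_nonneg _) zero_le_one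
      _ = ε := one_mul ε

lemma sphOmega_null (u : Euc n) (hu : u ≠ 0) :
    sphOmega n {v : Metric.sphere (0 : Euc n) 1 | (inner ℝ u (v : Euc n) : ℝ) = 0} = 0 := by
  set B := {v : Metric.sphere (0 : Euc n) 1 | (inner ℝ u (v : Euc n) : ℝ) = 0} with hB
  have hBmeas : MeasurableSet B := by
    apply IsClosed.measurableSet
    exact isClosed_eq (continuous_const.inner continuous_subtype_val) continuous_const
  rw [sphOmega_apply', Measure.toSphere_apply' _ hBmeas]
  have hsub : Set.Ioo (0:ℝ) 1 • (Subtype.val '' B) ⊆ ((ℝ ∙ u)ᗮ : Submodule ℝ (Euc n)) := by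
    rintro x hx
    rw [Set.mem_smul] at hx
    obtain ⟨r, hr, y, hy, rfl⟩ := hx
    obtain ⟨v, hvB, rfl⟩ := hy
    rw [SetLike.mem_coe, Submodule.mem_orthogonal_singleton_iff_inner_right]
    rw [real_inner_smul_right, hvB, mul_zero]
  have hne : (ℝ ∙ u)ᗮ ≠ (⊤ : Submodule ℝ (Euc n)) := by
    intro h
    have : u ∈ (ℝ ∙ u)ᗮ := h ▸ Submodule.mem_top
    rw [Submodule.mem_orthogonal_singleton_iff_inner_right] at this
    exact hu (inner_self_eq_zero.mp this)
  have hz : volume (Set.Ioo (0:ℝ) 1 • (Subtype.val '' B)) = 0 :=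
    measure_mono_null hsub (Measure.addHaar_submodule volume _ hne)
  rw [hz, mul_zero, mul_zero]

lemma sphOmega_lune_pos (hn : 1 ≤ n) (p q w : Euc n)
    (hpw : 0 < (inner ℝ p w : ℝ)) (hqw : (inner ℝ q w : ℝ) < 0) :
    0 < sphOmega n {v : Metric.sphere (0 : Euc n) 1 |
      0 < (inner ℝ p (v : Euc n) : ℝ) ∧ (inner ℝ q (v : Euc n) : ℝ) < 0} := by
  set V : Set (Euc n) := {x | 0 < (inner ℝ p x : ℝ) ∧ (inner ℝ q x : ℝ) < 0} with hV
  have hcp : Continuous fun x : Euc n => (inner ℝ p x : ℝ) := continuous_const.inner continuous_id'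
  have hcq : Continuous fun x : Euc n => (inner ℝ q x : ℝ) := continuous_const.inner continuous_id'
  have hVopen : IsOpen V := (isOpen_lt continuous_const hcp).inter (isOpen_lt hcq continuous_const)
  set U := (Subtype.val : Metric.sphere (0 : Euc n) 1 → Euc n) ⁻¹' V with hU
  have hUmeas : MeasurableSet U :=
    (hVopen.preimage continuous_subtype_val).measurableSet
  have hw0 : w ≠ 0 := by
    rintro rfl
    simp at hpw
  have hkey : Metric.ball (0 : Euc n) 1 ∩ V ⊆ Set.Ioo (0:ℝ) 1 • (Subtype.val '' U) := by
    rintro x ⟨hx1, hx2⟩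
    have hx0 : x ≠ 0 := by
      rintro rfl
      simp [hV] at hx2
    have hxn : 0 < ‖x‖ := norm_pos_iff.mpr hx0
    have hxlt : ‖x‖ < 1 := mem_ball_zero_iff.mp hx1
    refine Set.mem_smul.mpr ⟨‖x‖, ⟨hxn, hxlt⟩, ‖x‖⁻¹ • x, ?_, smul_inv_smul₀ hxn.ne' x⟩
    refine ⟨⟨‖x‖⁻¹ • x, ?_⟩, ?_, rfl⟩
    · exact mem_sphere_zero_iff_norm.mpr (norm_smul_inv_norm hx0)
    · simp only [hU, mem_preimage, hV, mem_setOf_eq]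
      constructor
      · rw [real_inner_smul_right]
        exact mul_pos (inv_pos.mpr hxn) hx2.1
      · rw [real_inner_smul_right]
        exact mul_neg_of_pos_of_neg (inv_pos.mpr hxn) hx2.2
  have hne : (Metric.ball (0 : Euc n) 1 ∩ V).Nonempty := by
    refine ⟨(2⁻¹ * ‖w‖⁻¹) • w, ?_, ?_, ?_⟩
    · rw [mem_ball_zero_iff, norm_smul]
      have : ‖w‖ ≠ 0 := norm_ne_zero_iff.mpr hw0
      rw [Real.norm_eq_abs, abs_of_pos (by positivity), mul_assoc, inv_mul_cancel₀ this]
      norm_num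
    · rw [real_inner_smul_right]
      have h0 : (0:ℝ) < ‖w‖ := norm_pos_iff.mpr hw0
      have : (0:ℝ) < 2⁻¹ * ‖w‖⁻¹ := by positivity
      exact mul_pos this hpw
    · rw [real_inner_smul_right]
      have h0 : (0:ℝ) < ‖w‖ := norm_pos_iff.mpr hw0
      have : (0:ℝ) < 2⁻¹ * ‖w‖⁻¹ := by positivity
      exact mul_neg_of_pos_of_neg this hqw
  have hvpos : 0 < volume (Set.Ioo (0:ℝ) 1 • (Subtype.val '' U)) :=
    lt_of_lt_of_le ((Metric.isOpen_ball.inter hVopen).measure_pos volume hne) (measure_mono hkey)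
  have hUeq : {v : Metric.sphere (0 : Euc n) 1 |
      0 < (inner ℝ p (v : Euc n) : ℝ) ∧ (inner ℝ q (v : Euc n) : ℝ) < 0} = U := rfl
  rw [hUeq, sphOmega_apply', Measure.toSphere_apply' _ hUmeas]
  apply ENNReal.mul_pos
  · exact (ENNReal.inv_pos.mpr (measure_ne_top _ _)).ne'
  · apply (ENNReal.mul_pos ?_ hvpos.ne').ne'
    have : Module.finrank ℝ (Euc n) = n := finrank_euclideanSpace_fin
    rw [this]
    simpa using by omega


lemma eq_line_of_smul (x y a : Euc n) (r : ℝ) (hr : r ≠ 1) (h : x - a = r • (y - a)) :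
    ∃ t : ℝ, a = x + t • (y - x) := by
  have hr' : r - 1 ≠ 0 := sub_ne_zero.mpr hr
  have hyx : y - x = (1 - r) • (y - a) := by
    have h2 : y - x = (y - a) - (x - a) := by abel
    rw [h2, h, sub_smul, one_smul]
  refine ⟨r / (r - 1), ?_⟩
  rw [hyx, smul_smul]
  have h3 : r / (r - 1) * (1 - r) = -r := by field_simp; ring
  rw [h3, neg_smul, ← h]
  abel

lemma not_line_abs_inner_lt (x y a : Euc n) (hxy : x ≠ y)
    (ha : ¬ ∃ t : ℝ, a = x + t • (y - x)) :
    |(inner ℝ (x - a) (y - a) : ℝ)| < ‖x - a‖ * ‖y - a‖ := by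
  set p := x - a with hp
  set q := y - a with hq
  have haux : ∀ r : ℝ, p ≠ r • q := by
    intro r hrr
    by_cases h1 : r = 1
    · subst h1
      rw [one_smul] at hrr
      exact hxy (sub_left_inj.mp hrr)
    · exact ha (eq_line_of_smul x y a r h1 hrr)
  have hq0 : q ≠ 0 := by
    intro h0
    have hay : a = y := (sub_eq_zero.mp h0).symm
    exact ha ⟨1, by rw [one_smul, hay]; abel⟩
  have hqn : (0:ℝ) < ‖q‖ := norm_pos_iff.mpr hq0
  rw [abs_lt]
  constructor
  · have key : ‖q‖ • (-p) ≠ ‖-p‖ • q := by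
      intro hk
      apply haux (-(‖q‖⁻¹ * ‖p‖))
      have := congrArg (fun z => ‖q‖⁻¹ • z) hk
      simp only [smul_smul] at this
      rw [inv_mul_cancel₀ hqn.ne', one_smul, norm_neg] at this
      rw [neg_smul]
      exact neg_eq_iff_eq_neg.mp this
    have := inner_lt_norm_mul_iff_real.mpr key
    rw [inner_neg_left, norm_neg] at this
    linarith
  · have key : ‖q‖ • p ≠ ‖p‖ • q := by
      intro hk
      apply haux (‖q‖⁻¹ * ‖p‖)
      have := congrArg (fun z => ‖q‖⁻¹ • z) hk
      simp only [smul_smul] at this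
      rw [inv_mul_cancel₀ hqn.ne', one_smul] at this
      exact this
    exact inner_lt_norm_mul_iff_real.mpr key

lemma exists_lune_w (p q : Euc n) (h : |(inner ℝ p q : ℝ)| < ‖p‖ * ‖q‖) :
    ∃ w : Euc n, 0 < (inner ℝ p w : ℝ) ∧ (inner ℝ q w : ℝ) < 0 := by
  have hq0 : q ≠ 0 := by
    rintro rfl
    simp only [norm_zero, mul_zero] at h
    exact absurd h (not_lt.mpr (abs_nonneg _))
  have hqn : (0:ℝ) < ‖q‖ := norm_pos_iff.mpr hq0
  set ip : ℝ := inner ℝ p q with hip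
  set gap : ℝ := ‖p‖ ^ 2 * ‖q‖ ^ 2 - ip ^ 2 with hgap
  have hgappos : 0 < gap := by
    have h2 : ip ^ 2 < (‖p‖ * ‖q‖) ^ 2 := by
      rw [← sq_abs ip]
      apply pow_lt_pow_left₀ h (abs_nonneg _)
      norm_num
    rw [hgap]; nlinarith
  set δ : ℝ := gap / (|ip| + 1) with hδ
  have hδpos : 0 < δ := by
    apply div_pos hgappos
    positivity
  refine ⟨(‖q‖ ^ 2) • p - (ip + δ) • q, ?_, ?_⟩
  · rw [inner_sub_right, real_inner_smul_right, real_inner_smul_right]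
    rw [← hip, real_inner_self_eq_norm_sq]
    have h1 : δ * ip < gap := by
      have h2 : δ * |ip| < gap := by
        rw [hδ]
        rw [div_mul_eq_mul_div, div_lt_iff₀ (by positivity)]
        nlinarith [hgappos]
      calc δ * ip ≤ δ * |ip| := by
            apply mul_le_mul_of_nonneg_left (le_abs_self ip) hδpos.le
        _ < gap := h2
    rw [hgap] at h1
    nlinarith
  · rw [inner_sub_right, real_inner_smul_right, real_inner_smul_right]
    rw [real_inner_comm p q, ← hip, real_inner_self_eq_norm_sq]
    have : 0 < δ * ‖q‖ ^ 2 := by positivity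
    nlinarith

lemma seg_mem_slice (x y a v : Euc n)
    (h0 : 0 < (inner ℝ (x - a) v : ℝ)) (h1 : (inner ℝ (y - a) v : ℝ) < 0) :
    ∃ z ∈ segment ℝ x y, (inner ℝ z v : ℝ) = inner ℝ a v := by
  set g : ℝ → ℝ := fun t => (inner ℝ (x + t • (y - x)) v : ℝ) - inner ℝ a v with hg
  have hgc : Continuous g := by
    have heq : g = fun t => ((inner ℝ x v : ℝ) + t * (inner ℝ (y - x) v : ℝ)) - (inner ℝ a v : ℝ) := by
      funext t
      simp only [hg, inner_add_left, real_inner_smul_left]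
    rw [heq]
    continuity
  have hg0 : 0 < g 0 := by
    simp only [hg, zero_smul, add_zero]
    rw [inner_sub_left] at h0
    linarith
  have hg1 : g 1 < 0 := by
    simp only [hg, one_smul]
    rw [inner_sub_left] at h1
    have hxyy : x + (y - x) = y := by abel
    rw [hxyy]
    linarith
  have hsub := intermediate_value_Icc' (zero_le_one (α := ℝ)) hgc.continuousOn
  have h0mem : (0:ℝ) ∈ Icc (g 1) (g 0) := ⟨hg1.le, hg0.le⟩
  obtain ⟨t, ht, hgt⟩ := hsub h0mem
  refine ⟨x + t • (y - x), ?_, ?_⟩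
  · rw [segment_eq_image' ℝ x y]
    exact mem_image_of_mem _ ht
  · have : (inner ℝ (x + t • (y - x)) v : ℝ) - inner ℝ a v = 0 := hgt
    linarith

end Stmt16Aux

/-- if `μ` is a nonatomic Radon measure whose support is not contained in any
line and `0 < ∫ |x|⁻¹ dμ < ∞`, then `ν = Φ_*(μ × ω)` satisfies the standing assumptions:
null on hyperplanes through a point, positive on hyperplanes meeting a nondegenerate
segment, finite on hyperplanes meeting a compact set. -/
theorem stmt16 (n : ℕ) (hn : 2 ≤ n) (μ : Measure (Euc n)) [IsFiniteMeasureOnCompacts μ]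
    (hatom : ∀ x : Euc n, μ {x} = 0)
    (hline : ∀ p v : Euc n, v ≠ 0 → 0 < μ ({x | ∃ t : ℝ, x = p + t • v}ᶜ))
    (hpos : 0 < ∫⁻ x, ENNReal.ofReal ‖x‖⁻¹ ∂μ)
    (hfin : ∫⁻ x, ENNReal.ofReal ‖x‖⁻¹ ∂μ < ⊤) :
    (∀ p : Euc n, nuPush μ (meets {p}) = 0) ∧
    (∀ x y : Euc n, x ≠ y → 0 < nuPush μ (meets (segment ℝ x y))) ∧
    (∀ K : Set (Euc n), IsCompact K → nuPush μ (meets K) < ⊤) := by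
  haveI hbs : BorelSpace (Hyp n) :=
    Subtype.borelSpace {p : Euc n × ℝ | ‖p.1‖ = 1}
  haveI hωfin : IsFiniteMeasure (sphOmega n) := Stmt16Aux.isFiniteMeasure_sphOmega (by omega)
  have hmeasPhi : Measurable (PhiMap (n := n)) := Stmt16Aux.continuous_PhiMap.measurable
  have hn1 : 1 ≤ n := by omega
  refine ⟨?_, ?_, ?_⟩
  · -- Part 1: points
    intro p
    have hA : MeasurableSet (meets {p}) :=
      (Stmt16Aux.isClosed_meets isCompact_singleton).measurableSet
    rw [nuPush, Measure.map_apply hmeasPhi hA, Measure.prod_apply (hmeasPhi hA)]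
    have hzero : ∀ a : Euc n, a ≠ p →
        sphOmega n (Prod.mk a ⁻¹' (PhiMap ⁻¹' meets {p})) = 0 := by
      intro a hap
      have hseteq : Prod.mk a ⁻¹' (PhiMap ⁻¹' meets {p}) =
          {v : Metric.sphere (0 : Euc n) 1 | (inner ℝ (p - a) (v : Euc n) : ℝ) = 0} := by
        ext v
        simp only [mem_preimage, mem_setOf_eq]
        rw [Stmt16Aux.mem_meets_iff]
        constructor
        · rintro ⟨z, hz, hz2⟩
          rw [mem_singleton_iff] at hz
          subst hz
          rw [inner_sub_left, hz2, sub_self]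
        · intro hv
          rw [inner_sub_left, sub_eq_zero] at hv
          exact ⟨p, rfl, hv⟩
      rw [hseteq]
      exact Stmt16Aux.sphOmega_null (p - a) (sub_ne_zero.mpr fun h => hap h.symm)
    have hae : ∀ᵐ a ∂μ, sphOmega n (Prod.mk a ⁻¹' (PhiMap ⁻¹' meets {p})) = 0 := by
      rw [ae_iff]
      apply measure_mono_null ?_ (hatom p)
      intro a ha
      simp only [mem_setOf_eq] at ha
      by_contra hap
      rw [mem_singleton_iff] at hap
      exact ha (hzero a hap)
    rw [lintegral_congr_ae hae, lintegral_zero]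
  · -- Part 2: segments
    intro x y hxy
    have hscomp : IsCompact (segment ℝ x y) := by
      rw [segment_eq_image ℝ x y]
      exact isCompact_Icc.image (by fun_prop)
    have hA : MeasurableSet (meets (segment ℝ x y)) :=
      (Stmt16Aux.isClosed_meets hscomp).measurableSet
    rw [nuPush, Measure.map_apply hmeasPhi hA, Measure.prod_apply (hmeasPhi hA)]
    set f := fun a : Euc n => sphOmega n (Prod.mk a ⁻¹' (PhiMap ⁻¹' meets (segment ℝ x y)))
      with hf
    have hfm : Measurable f := measurable_measure_prodMk_left (hmeasPhi hA)
    rw [pos_iff_ne_zero]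
    intro hzero
    have hae := (lintegral_eq_zero_iff hfm).mp hzero
    have hnull : μ {a : Euc n | ¬ f a = 0} = 0 := by
      rw [← ae_iff]
      exact hae
    have hsubset : {z : Euc n | ∃ t : ℝ, z = x + t • (y - x)}ᶜ ⊆ {a : Euc n | ¬ f a = 0} := by
      intro a ha
      simp only [mem_compl_iff, mem_setOf_eq] at ha ⊢
      have hlt := Stmt16Aux.not_line_abs_inner_lt x y a hxy ha
      obtain ⟨w, hw1, hw2⟩ := Stmt16Aux.exists_lune_w (x - a) (y - a) hlt
      have hpos := Stmt16Aux.sphOmega_lune_pos hn1 (x - a) (y - a) w hw1 hw2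
      have hsub2 : {v : Metric.sphere (0 : Euc n) 1 |
          0 < (inner ℝ (x - a) (v : Euc n) : ℝ) ∧ (inner ℝ (y - a) (v : Euc n) : ℝ) < 0} ⊆
          Prod.mk a ⁻¹' (PhiMap ⁻¹' meets (segment ℝ x y)) := by
        intro v hv
        simp only [mem_preimage]
        rw [Stmt16Aux.mem_meets_iff]
        exact Stmt16Aux.seg_mem_slice x y a (v : Euc n) hv.1 hv.2
      exact (lt_of_lt_of_le hpos (measure_mono hsub2)).ne'
    have := measure_mono_null hsubset hnull
    exact (hline x (y - x) (sub_ne_zero.mpr (Ne.symm hxy))).ne' this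
  · -- Part 3: compact sets
    intro K hK
    have hA : MeasurableSet (meets K) := (Stmt16Aux.isClosed_meets hK).measurableSet
    rw [nuPush, Measure.map_apply hmeasPhi hA, Measure.prod_apply (hmeasPhi hA)]
    obtain ⟨R, hR0, hRK⟩ : ∃ R : ℝ, 0 ≤ R ∧ K ⊆ closedBall 0 R := by
      obtain ⟨R, hR⟩ := hK.isBounded.subset_closedBall 0
      exact ⟨max R 0, le_max_right _ _,
        hR.trans (closedBall_subset_closedBall (le_max_left _ _))⟩
    set C : ℝ≥0∞ := ((volume : Measure (Euc n)).toSphere univ)⁻¹ *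
      ((n : ℝ≥0∞) * (ENNReal.ofReal R * 2 ^ (n + 1))) with hC
    have hCfin : C < ⊤ := by
      rw [hC]
      apply ENNReal.mul_lt_top
      · rw [ENNReal.inv_lt_top]
        exact Stmt16Aux.toSphere_univ_pos hn1
      · apply ENNReal.mul_lt_top (ENNReal.natCast_lt_top n)
        apply ENNReal.mul_lt_top ENNReal.ofReal_lt_top
        exact ENNReal.pow_lt_top (by norm_num)
    have hbound : ∀ a : Euc n, sphOmega n (Prod.mk a ⁻¹' (PhiMap ⁻¹' meets K)) ≤
        (closedBall (0 : Euc n) 1).indicator (fun _ => sphOmega n univ) a +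
          C * ENNReal.ofReal ‖a‖⁻¹ := by
      intro a
      by_cases ha : ‖a‖ ≤ 1
      · refine le_trans (measure_mono (subset_univ _)) ?_
        rw [indicator_of_mem (mem_closedBall_zero_iff.mpr ha)]
        exact le_self_add
      · push_neg at ha
        have han : (0:ℝ) < ‖a‖ := lt_trans one_pos ha
        have ha0 : a ≠ 0 := norm_pos_iff.mp han
        have hsub : Prod.mk a ⁻¹' (PhiMap ⁻¹' meets K) ⊆
            {v : Metric.sphere (0 : Euc n) 1 |
              |(inner ℝ (‖a‖⁻¹ • a) (v : Euc n) : ℝ)| ≤ R * ‖a‖⁻¹} := by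
          intro v hv
          simp only [mem_preimage] at hv
          rw [Stmt16Aux.mem_meets_iff] at hv
          obtain ⟨z, hzK, hzv⟩ := hv
          simp only [mem_setOf_eq]
          rw [real_inner_smul_left, ← hzv, abs_mul, abs_of_pos (inv_pos.mpr han)]
          rw [mul_comm (R : ℝ) (‖a‖⁻¹ : ℝ)]
          apply mul_le_mul_of_nonneg_left ?_ (inv_pos.mpr han).le
          have h1 : |(inner ℝ z (v : Euc n) : ℝ)| ≤ ‖z‖ * ‖(v : Euc n)‖ :=
            abs_real_inner_le_norm z (v : Euc n)
          have h2 : ‖(v : Euc n)‖ = 1 := mem_sphere_zero_iff_norm.mp v.2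
          have h3 : ‖z‖ ≤ R := by
            have := hRK hzK
            rwa [mem_closedBall_zero_iff] at this
          calc |(inner ℝ z (v : Euc n) : ℝ)| ≤ ‖z‖ * ‖(v : Euc n)‖ := h1
            _ ≤ R := by rw [h2, mul_one]; exact h3
        have hband := Stmt16Aux.toSphere_band_le hn1 (‖a‖⁻¹ • a)
          (norm_smul_inv_norm ha0) (ε := R * ‖a‖⁻¹)
          (mul_nonneg hR0 (inv_pos.mpr han).le)
        calc sphOmega n (Prod.mk a ⁻¹' (PhiMap ⁻¹' meets K))
            ≤ sphOmega n {v : Metric.sphere (0 : Euc n) 1 |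
              |(inner ℝ (‖a‖⁻¹ • a) (v : Euc n) : ℝ)| ≤ R * ‖a‖⁻¹} := measure_mono hsub
          _ = ((volume : Measure (Euc n)).toSphere univ)⁻¹ *
              (volume : Measure (Euc n)).toSphere {v : Metric.sphere (0 : Euc n) 1 |
              |(inner ℝ (‖a‖⁻¹ • a) (v : Euc n) : ℝ)| ≤ R * ‖a‖⁻¹} :=
              Stmt16Aux.sphOmega_apply' _
          _ ≤ ((volume : Measure (Euc n)).toSphere univ)⁻¹ *
              ((n : ℝ≥0∞) * (ENNReal.ofReal (R * ‖a‖⁻¹) * 2 ^ (n + 1))) := by gcongr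
          _ = C * ENNReal.ofReal ‖a‖⁻¹ := by
              rw [ENNReal.ofReal_mul hR0, hC]
              ring
          _ ≤ _ := le_add_self
    refine lt_of_le_of_lt (lintegral_mono hbound) ?_
    have hm1 : Measurable ((closedBall (0 : Euc n) 1).indicator
        (fun _ => sphOmega n univ)) :=
      measurable_const.indicator measurableSet_closedBall
    rw [lintegral_add_left hm1]
    apply ENNReal.add_lt_top.mpr
    constructor
    · rw [lintegral_indicator measurableSet_closedBall, setLIntegral_const]
      exact ENNReal.mul_lt_top (measure_lt_top _ _)
        ((isCompact_closedBall (0 : Euc n) 1).measure_lt_top)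
    · rw [lintegral_const_mul C (f := fun a : Euc n => ENNReal.ofReal ‖a‖⁻¹) (measurable_norm.inv.ennreal_ofReal)]
      exact ENNReal.mul_lt_top hCfin hfin
end
end
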